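/- Define, for a sufficiently smooth function û on K̂ = [−1,1]² and v̂ in the reference shape space P̂ = P₂(K̂) + span{ξ₁³, ξ₂³}, the functional B₂(û, v̂) = (1/3)∫_{K̂} (∂³û/∂ξ₁∂ξ₂²)(∂³v̂/∂ξ₁³) dξ + (1/3)∫_{K̂} (∂³û/∂ξ₁²∂ξ₂)(∂³v̂/∂ξ₂³) dξ − (1/6)∫_{K̂} (∫_{−1}^{1} (∂³û/∂ξ₁∂ξ₂²)(1, ξ₂) dξ₂)(∂³v̂/∂ξ₁³) dξ − (1/6)∫_{K̂} (∫_{−1}^{1} (∂³û/∂ξ₁²∂ξ₂)(ξ₁, −1) dξ₁)(∂³v̂/∂ξ₂³) dξ. Then B₂(û, v̂) = 0 for every polynomial û of total degree ≤ 3 and every v̂ ∈ P̂. -/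

import Mathlib

open MeasureTheory

/-- Partial derivative in the first variable of a curried function on `ℝ²`. -/
noncomputable def pdx (f : ℝ → ℝ → ℝ) : ℝ → ℝ → ℝ := fun x y => deriv (fun t => f t y) x

/-- Partial derivative in the second variable of a curried function on `ℝ²`. -/
noncomputable def pdy (f : ℝ → ℝ → ℝ) : ℝ → ℝ → ℝ := fun x y => deriv (fun t => f x t) y

/-- Membership in the shape space `P(K) = P₂(K) + span{x₁³, x₂³}` of the two-dimensional
rectangular Morley element. -/
def MorleyShape2 (w : ℝ → ℝ → ℝ) : Prop :=
  ∃ c0 c1 c2 c3 c4 c5 c6 c7 : ℝ, ∀ x y : ℝ,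
    w x y = c0 + c1 * x + c2 * y + c3 * x ^ 2 + c4 * (x * y) + c5 * y ^ 2
      + c6 * x ^ 3 + c7 * y ^ 3

/-- The functional `B₂` on the reference square `[-1,1]²`. -/
noncomputable def B2 (u v : ℝ → ℝ → ℝ) : ℝ :=
  (1 / 3) * (∫ x in (-1:ℝ)..1, ∫ y in (-1:ℝ)..1,
      pdx (pdy (pdy u)) x y * pdx (pdx (pdx v)) x y)
    + (1 / 3) * (∫ x in (-1:ℝ)..1, ∫ y in (-1:ℝ)..1,
      pdx (pdx (pdy u)) x y * pdy (pdy (pdy v)) x y)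
    - (1 / 6) * (∫ x in (-1:ℝ)..1, ∫ y in (-1:ℝ)..1,
      (∫ t in (-1:ℝ)..1, pdx (pdy (pdy u)) 1 t) * pdx (pdx (pdx v)) x y)
    - (1 / 6) * (∫ x in (-1:ℝ)..1, ∫ y in (-1:ℝ)..1,
      (∫ t in (-1:ℝ)..1, pdx (pdx (pdy u)) t (-1)) * pdy (pdy (pdy v)) x y)

/-- Membership in the space of polynomials of total degree at most 3 in two variables. -/
def PolyDeg3Two (u : ℝ → ℝ → ℝ) : Prop :=
  ∃ c0 c1 c2 c3 c4 c5 c6 c7 c8 c9 : ℝ, ∀ x y : ℝ,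
    u x y = c0 + c1 * x + c2 * y + c3 * x ^ 2 + c4 * (x * y) + c5 * y ^ 2
      + c6 * x ^ 3 + c7 * (x ^ 2 * y) + c8 * (x * y ^ 2) + c9 * y ^ 3

/-- Derivative of a cubic polynomial in one variable. -/
lemma cubic_deriv (a b c d y : ℝ) :
    deriv (fun t : ℝ => a + b * t + c * t ^ 2 + d * t ^ 3) y
      = b + 2 * c * y + 3 * d * y ^ 2 := by
  have h : HasDerivAt (fun t : ℝ => a + b * t + c * t ^ 2 + d * t ^ 3)
      (b + 2 * c * y + 3 * d * y ^ 2) y := by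
    have h2 := (hasDerivAt_pow 2 y).const_mul c
    have h3 := (hasDerivAt_pow 3 y).const_mul d
    have h1 := (hasDerivAt_id y).const_mul b
    have := (((hasDerivAt_const y a).add h1).add h2).add h3
    exact this.congr_deriv (by push_cast; ring)
  exact h.deriv

/-- The functional `B₂` vanishes on cubic polynomials tested against the reference
Morley shape space. -/
theorem stmt_9 (u v : ℝ → ℝ → ℝ) (hu : PolyDeg3Two u) (hv : MorleyShape2 v) :
    B2 u v = 0 := by
  obtain ⟨c0, c1, c2, c3, c4, c5, c6, c7, c8, c9, hu⟩ := hu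
  obtain ⟨d0, d1, d2, d3, d4, d5, d6, d7, hv⟩ := hv
  -- first y-derivative of u
  have hpy : pdy u = fun x y =>
      (c2 + c4 * x + c7 * x ^ 2) + 2 * (c5 + c8 * x) * y + 3 * c9 * y ^ 2 := by
    funext x y
    show deriv (fun t => u x t) y = _
    have h : (fun t => u x t)
        = (fun t : ℝ => (c0 + c1 * x + c3 * x ^ 2 + c6 * x ^ 3)
            + (c2 + c4 * x + c7 * x ^ 2) * t + (c5 + c8 * x) * t ^ 2 + c9 * t ^ 3) := by
      funext t; rw [hu]; ring
    rw [h, cubic_deriv]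
  -- second y-derivative of u
  have hpyy : pdy (pdy u) = fun x y => 2 * (c5 + c8 * x) + 6 * c9 * y := by
    funext x y
    show deriv (fun t => pdy u x t) y = _
    have h : (fun t => pdy u x t)
        = (fun t : ℝ => (c2 + c4 * x + c7 * x ^ 2) + (2 * (c5 + c8 * x)) * t
            + (3 * c9) * t ^ 2 + 0 * t ^ 3) := by
      funext t; rw [hpy]; ring
    rw [h, cubic_deriv]; ring
  -- ∂³u/∂x∂y² = 2 c8
  have huxyy : pdx (pdy (pdy u)) = fun _ _ => 2 * c8 := by
    funext x y
    show deriv (fun t => pdy (pdy u) t y) x = _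
    have h : (fun t => pdy (pdy u) t y)
        = (fun t : ℝ => (2 * c5 + 6 * c9 * y) + (2 * c8) * t + 0 * t ^ 2 + 0 * t ^ 3) := by
      funext t; rw [hpyy]; ring
    rw [h, cubic_deriv]; ring
  -- ∂x of ∂y u
  have hpxy : pdx (pdy u) = fun x y => (c4 + 2 * c8 * y) + 2 * c7 * x := by
    funext x y
    show deriv (fun t => pdy u t y) x = _
    have h : (fun t => pdy u t y)
        = (fun t : ℝ => (c2 + 2 * c5 * y + 3 * c9 * y ^ 2) + (c4 + 2 * c8 * y) * t
            + c7 * t ^ 2 + 0 * t ^ 3) := by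
      funext t; rw [hpy]; ring
    rw [h, cubic_deriv]; ring
  -- ∂³u/∂x²∂y = 2 c7
  have huxxy : pdx (pdx (pdy u)) = fun _ _ => 2 * c7 := by
    funext x y
    show deriv (fun t => pdx (pdy u) t y) x = _
    have h : (fun t => pdx (pdy u) t y)
        = (fun t : ℝ => (c4 + 2 * c8 * y) + (2 * c7) * t + 0 * t ^ 2 + 0 * t ^ 3) := by
      funext t; rw [hpxy]; ring
    rw [h, cubic_deriv]; ring
  -- derivatives of v
  have hvx : pdx v = fun x y => (d1 + d4 * y) + 2 * d3 * x + 3 * d6 * x ^ 2 := by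
    funext x y
    show deriv (fun t => v t y) x = _
    have h : (fun t => v t y)
        = (fun t : ℝ => (d0 + d2 * y + d5 * y ^ 2 + d7 * y ^ 3)
            + (d1 + d4 * y) * t + d3 * t ^ 2 + d6 * t ^ 3) := by
      funext t; rw [hv]; ring
    rw [h, cubic_deriv]
  have hvxx : pdx (pdx v) = fun x _ => 2 * d3 + 6 * d6 * x := by
    funext x y
    show deriv (fun t => pdx v t y) x = _
    have h : (fun t => pdx v t y)
        = (fun t : ℝ => (d1 + d4 * y) + (2 * d3) * t + (3 * d6) * t ^ 2 + 0 * t ^ 3) := by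
      funext t; rw [hvx]; ring
    rw [h, cubic_deriv]; ring
  have hvxxx : pdx (pdx (pdx v)) = fun _ _ => 6 * d6 := by
    funext x y
    show deriv (fun t => pdx (pdx v) t y) x = _
    have h : (fun t => pdx (pdx v) t y)
        = (fun t : ℝ => 2 * d3 + (6 * d6) * t + 0 * t ^ 2 + 0 * t ^ 3) := by
      funext t; rw [hvxx]; ring
    rw [h, cubic_deriv]; ring
  have hvy : pdy v = fun x y => (d2 + d4 * x) + 2 * d5 * y + 3 * d7 * y ^ 2 := by
    funext x y
    show deriv (fun t => v x t) y = _
    have h : (fun t => v x t)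
        = (fun t : ℝ => (d0 + d1 * x + d3 * x ^ 2 + d6 * x ^ 3)
            + (d2 + d4 * x) * t + d5 * t ^ 2 + d7 * t ^ 3) := by
      funext t; rw [hv]; ring
    rw [h, cubic_deriv]
  have hvyy : pdy (pdy v) = fun _ y => 2 * d5 + 6 * d7 * y := by
    funext x y
    show deriv (fun t => pdy v x t) y = _
    have h : (fun t => pdy v x t)
        = (fun t : ℝ => (d2 + d4 * x) + (2 * d5) * t + (3 * d7) * t ^ 2 + 0 * t ^ 3) := by
      funext t; rw [hvy]; ring
    rw [h, cubic_deriv]; ring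
  have hvyyy : pdy (pdy (pdy v)) = fun _ _ => 6 * d7 := by
    funext x y
    show deriv (fun t => pdy (pdy v) x t) y = _
    have h : (fun t => pdy (pdy v) x t)
        = (fun t : ℝ => 2 * d5 + (6 * d7) * t + 0 * t ^ 2 + 0 * t ^ 3) := by
      funext t; rw [hvyy]; ring
    rw [h, cubic_deriv]; ring
  unfold B2
  rw [huxyy, huxxy, hvxxx, hvyyy]
  simp [intervalIntegral.integral_const]
  ring
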